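/- Let q = 2^m, identify GF(2^m) with F_2^m via a fixed F_2-basis, and for x ∈ GF(2^m)^N define its bit weight bw(x) as the sum over all coordinates of the Hamming weights of their binary images. Let K ≥ K_0 ≥ 1 and L ≥ 1 be integers with N = KL, and let the K_0·L labels of the strip pattern with parameters (K, K_0, L) be i.i.d. uniformly random nonzero elements of GF(2^m), giving a random L×N matrix H over GF(2^m). Then for every real ρ > 0, the expectation over the labels of Σ_{x ∈ GF(2^m)^N : Hx = 0} ρ^{bw(x)} equals f(φ(ρ))^L, where f(s) = (1/q)·[(1+(q−1)s)^{K_0} + (q−1)(1−s)^{K_0}] · (1+(q−1)s)^{K−K_0} and φ(ρ) = ((1+ρ)^m − 1)/(q−1). -/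

import Mathlib

/-- The index `i·L + t` (0-based) of the one in row `t` and occurrence `i` of the strip
pattern, as an element of `Fin (K*L)`. -/
def stripIdx (K L i t : ℕ) (hi : i < K) (ht : t < L) : Fin (K * L) :=
  ⟨i * L + t, by
    calc i * L + t < i * L + L := Nat.add_lt_add_left ht _
      _ = (i + 1) * L := by ring
      _ ≤ K * L := Nat.mul_le_mul_right L hi⟩

/-- The bit weight of a field element `a ∈ GF(2^m)` with respect to a fixed `F₂`-basis `b`:
the Hamming weight of the coordinate vector of `a`. -/
noncomputable def bitWt {F : Type*} [Field F] [Algebra (ZMod 2) F] {m : ℕ}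
    (b : Module.Basis (Fin m) (ZMod 2) F) (a : F) : ℕ :=
  (Finset.univ.filter (fun i => b.repr a i ≠ 0)).card

set_option linter.unusedSectionVars false

section Aux
variable {m : ℕ} {F : Type*} [Field F] [Fintype F] [DecidableEq F]
  [Algebra (ZMod 2) F] (b : Module.Basis (Fin m) (ZMod 2) F) (ρ : ℝ)

lemma pow_bitWt (a : F) : ρ ^ bitWt b a = ∏ i : Fin m, (if b.repr a i ≠ 0 then ρ else 1) := by
  rw [Finset.prod_ite, Finset.prod_const, Finset.prod_const, one_pow, mul_one, bitWt]

lemma sum_zmod2 (f : ZMod 2 → ℝ) : ∑ c : ZMod 2, f c = f 0 + f 1 := by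
  rw [show (Finset.univ : Finset (ZMod 2)) = {0, 1} from by decide,
    Finset.sum_insert (by decide), Finset.sum_singleton]

lemma sum_pow_bitWt : ∑ a : F, ρ ^ bitWt b a = (1 + ρ) ^ m := by
  have := Equiv.sum_comp b.equivFun.toEquiv.symm (fun a : F => ρ ^ bitWt b a)
  rw [← this]
  have h2 : ∀ v : Fin m → ZMod 2, ρ ^ bitWt b (b.equivFun.toEquiv.symm v)
      = ∏ i : Fin m, (if v i ≠ 0 then ρ else 1) := by
    intro v
    rw [pow_bitWt]
    congr 1; ext i
    have h3 : b.repr (b.equivFun.symm v) i = b.equivFun (b.equivFun.symm v) i := by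
      rw [Module.Basis.equivFun_apply]
    have h4 : b.equivFun (b.equivFun.symm v) = v := b.equivFun.apply_symm_apply v
    simp only [LinearEquiv.coe_toEquiv_symm, EquivLike.coe_coe]
    exact if_congr (by rw [h3, h4]) rfl rfl
  simp only [h2]
  rw [← Fintype.prod_sum (fun (_ : Fin m) (c : ZMod 2) => if c ≠ 0 then ρ else 1)]
  have : ∀ _i : Fin m, ∑ c : ZMod 2, (if c ≠ 0 then ρ else 1) = 1 + ρ := by
    intro i; rw [sum_zmod2]; norm_num
  rw [Finset.prod_congr rfl (fun i _ => this i), Finset.prod_const]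
  simp

lemma bitWt_zero : bitWt b (0 : F) = 0 := by
  simp [bitWt]

lemma sum_nz_pow_bitWt : ∑ a : {a : F // a ≠ 0}, ρ ^ bitWt b (a : F) = (1 + ρ) ^ m - 1 := by
  have h := sum_pow_bitWt b ρ
  rw [← Finset.add_sum_erase Finset.univ _ (Finset.mem_univ (0 : F))] at h
  rw [bitWt_zero, pow_zero] at h
  have h2 : ∑ a ∈ Finset.univ.erase (0 : F), ρ ^ bitWt b a
      = ∑ a : {a : F // a ≠ 0}, ρ ^ bitWt b (a : F) := by
    apply Finset.sum_subtype
    intro x; simp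
  linarith [h2 ▸ h]

end Aux


section Aux2
variable {m : ℕ} {F : Type*} [Field F] [Fintype F] [DecidableEq F]
  [Algebra (ZMod 2) F] (b : Module.Basis (Fin m) (ZMod 2) F) (ρ : ℝ)

lemma card_nz (hq : Fintype.card F = 2 ^ m) :
    Fintype.card {a : F // a ≠ 0} = 2 ^ m - 1 := by
  have := Fintype.card_subtype_compl (fun a : F => a = 0)
  simp only [ne_eq] at *
  rw [this, hq, Fintype.card_subtype_eq]

lemma pair_sum (hq : Fintype.card F = 2 ^ m) (c : F) :
    ∑ ℓ : {a : F // a ≠ 0}, ∑ y : F,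
      (if (ℓ : F) * y = c then (1:ℝ) else 0) * ρ ^ bitWt b y
    = if c = 0 then ((2:ℝ) ^ m - 1) else ((1 + ρ) ^ m - 1) := by
  rcases eq_or_ne c 0 with rfl | hc
  · rw [if_pos rfl]
    have inner : ∀ ℓ : {a : F // a ≠ 0}, ∑ y : F,
        (if (ℓ : F) * y = 0 then (1:ℝ) else 0) * ρ ^ bitWt b y = 1 := by
      intro ℓ
      rw [Finset.sum_eq_single_of_mem (0 : F) (Finset.mem_univ 0)]
      · simp [bitWt_zero]
      · intro y _ hy
        rw [if_neg (by simp [ℓ.2, hy]), zero_mul]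
    rw [Finset.sum_congr rfl (fun ℓ _ => inner ℓ), Finset.sum_const, nsmul_eq_mul, mul_one,
      Finset.card_univ, card_nz hq]
    have : (1:ℕ) ≤ 2 ^ m := Nat.one_le_two_pow
    push_cast [this]
    ring
  · rw [if_neg hc]
    have inner : ∀ ℓ : {a : F // a ≠ 0}, ∑ y : F,
        (if (ℓ : F) * y = c then (1:ℝ) else 0) * ρ ^ bitWt b y
        = ρ ^ bitWt b ((ℓ : F)⁻¹ * c) := by
      intro ℓ
      rw [Finset.sum_eq_single_of_mem ((ℓ : F)⁻¹ * c) (Finset.mem_univ _)]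
      · rw [if_pos (by rw [← mul_assoc, mul_inv_cancel₀ ℓ.2, one_mul]), one_mul]
      · intro y _ hy
        rw [if_neg, zero_mul]
        exact fun h => hy (by rw [← h, ← mul_assoc, inv_mul_cancel₀ ℓ.2, one_mul])
    rw [Finset.sum_congr rfl (fun ℓ _ => inner ℓ)]
    rw [← sum_nz_pow_bitWt b ρ]
    let f : {a : F // a ≠ 0} → {a : F // a ≠ 0} := fun ℓ => ⟨(ℓ : F)⁻¹ * c, by simp [ℓ.2, hc]⟩
    have hf : Function.Involutive f := fun ℓ => by
      ext
      show ((f ℓ : F))⁻¹ * c = (ℓ : F)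
      show ((ℓ : F)⁻¹ * c)⁻¹ * c = (ℓ : F)
      rw [mul_inv, inv_inv, mul_assoc, inv_mul_cancel₀ hc, mul_one]
    exact Fintype.sum_bijective f hf.bijective _ _ (fun ℓ => rfl)

end Aux2

section Aux3
variable {m : ℕ} {F : Type*} [Field F] [Fintype F] [DecidableEq F]
  [Algebra (ZMod 2) F] (b : Module.Basis (Fin m) (ZMod 2) F) (ρ : ℝ)

lemma sum_pi_succ {β M : Type*} [Fintype β] [AddCommMonoid M] (n : ℕ)
    (f : (Fin (n+1) → β) → M) :
    ∑ g : Fin (n+1) → β, f g = ∑ a : β, ∑ g' : Fin n → β, f (Fin.cons a g') := by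
  have hbij : Function.Bijective
      (fun p : β × (Fin n → β) => (Fin.cons p.1 p.2 : Fin (n+1) → β)) := by
    constructor
    · intro p q h
      have h0 : p.1 = q.1 := by have := congrFun h 0; simpa using this
      have h1 : p.2 = q.2 := by
        funext i
        have := congrFun h i.succ; simpa using this
      exact Prod.ext h0 h1
    · intro g
      refine ⟨(g 0, fun i => g i.succ), funext fun x => ?_⟩
      induction x using Fin.cases with
      | zero => simp
      | succ i => simp
  have h1 : ∑ p : β × (Fin n → β), f (Fin.cons p.1 p.2) = ∑ g : Fin (n+1) → β, f g :=
    Fintype.sum_bijective _ hbij _ _ (fun p => rfl)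
  rw [← h1, Fintype.sum_prod_type]

lemma sum_pi_pow_bitWt (n : ℕ) :
    ∑ y : Fin n → F, ρ ^ (∑ i, bitWt b (y i)) = ((1 + ρ) ^ m) ^ n := by
  rw [← sum_pow_bitWt b ρ, Fintype.sum_pow]
  exact Finset.sum_congr rfl fun y _ => (Finset.prod_pow_eq_pow_sum _ _ _).symm

lemma key_sum (hq : Fintype.card F = 2 ^ m) (S : F) :
    ∑ z₀ : {a : F // a ≠ 0} × F,
      (if (z₀.1 : F) * z₀.2 + S = 0 then (1:ℝ) else 0) * ρ ^ bitWt b z₀.2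
    = ((2:ℝ) ^ m - (1 + ρ) ^ m) * (if S = 0 then 1 else 0) + ((1 + ρ) ^ m - 1) := by
  rw [Fintype.sum_prod_type]
  simp only [add_eq_zero_iff_eq_neg]
  rw [pair_sum b ρ hq (-S)]
  rcases eq_or_ne S 0 with rfl | hS
  · simp
  · rw [if_neg (by simpa using hS), if_neg hS]; ring

lemma sum_pi_prod_pow (hq : Fintype.card F = 2 ^ m) (n : ℕ) :
    ∑ z : Fin n → ({a : F // a ≠ 0} × F), ρ ^ (∑ i, bitWt b (z i).2)
    = (((2:ℝ) ^ m - 1) * (1 + ρ) ^ m) ^ n := by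
  have h1 : ∑ p : {a : F // a ≠ 0} × F, ρ ^ bitWt b p.2
      = ((2:ℝ) ^ m - 1) * (1 + ρ) ^ m := by
    rw [Fintype.sum_prod_type]
    have : ∀ a : {a : F // a ≠ 0}, ∑ y : F, ρ ^ bitWt b y = (1 + ρ) ^ m :=
      fun _ => sum_pow_bitWt b ρ
    rw [Finset.sum_congr rfl fun a _ => this a, Finset.sum_const, Finset.card_univ,
      card_nz hq, nsmul_eq_mul]
    have h2 : (1:ℕ) ≤ 2 ^ m := Nat.one_le_two_pow
    push_cast [h2]
    ring
  rw [← h1, Fintype.sum_pow]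
  exact Finset.sum_congr rfl fun z _ => (Finset.prod_pow_eq_pow_sum _ _ _).symm

lemma Aform (hq : Fintype.card F = 2 ^ m) (n : ℕ) :
    ∑ z : Fin n → ({a : F // a ≠ 0} × F),
      (if (∑ i, ((z i).1 : F) * (z i).2) = 0 then (1:ℝ) else 0)
        * ρ ^ (∑ i, bitWt b (z i).2)
    = (((2:ℝ)^m - 1)^n * ((1+ρ)^m)^n + ((2:ℝ)^m - 1) * ((2:ℝ)^m - (1+ρ)^m)^n)
        / (2:ℝ)^m := by
  have hq0 : ((2:ℝ) ^ m) ≠ 0 := by positivity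
  induction n with
  | zero =>
    simp
  | succ n ih =>
    rw [sum_pi_succ]
    have step : ∀ z₀ : {a : F // a ≠ 0} × F, ∀ z' : Fin n → ({a : F // a ≠ 0} × F),
        (if (∑ i : Fin (n+1), (((Fin.cons z₀ z' : Fin (n+1) → _) i).1 : F)
              * ((Fin.cons z₀ z' : Fin (n+1) → _) i).2) = 0 then (1:ℝ) else 0)
          * ρ ^ (∑ i : Fin (n+1), bitWt b ((Fin.cons z₀ z' : Fin (n+1) → _) i).2)
        = ((if ((z₀.1 : F) * z₀.2 + ∑ i, ((z' i).1 : F) * (z' i).2) = 0 then (1:ℝ) else 0)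
            * ρ ^ bitWt b z₀.2) * ρ ^ (∑ i, bitWt b (z' i).2) := by
      intro z₀ z'
      simp only [Fin.sum_univ_succ, Fin.cons_zero, Fin.cons_succ, pow_add]
      ring
    simp only [step]
    rw [Finset.sum_comm]
    have inner : ∀ z' : Fin n → ({a : F // a ≠ 0} × F),
        ∑ z₀ : {a : F // a ≠ 0} × F,
          ((if ((z₀.1 : F) * z₀.2 + ∑ i, ((z' i).1 : F) * (z' i).2) = 0 then (1:ℝ) else 0)
            * ρ ^ bitWt b z₀.2) * ρ ^ (∑ i, bitWt b (z' i).2)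
        = ((2:ℝ) ^ m - (1 + ρ) ^ m) *
            ((if (∑ i, ((z' i).1 : F) * (z' i).2) = 0 then (1:ℝ) else 0)
              * ρ ^ (∑ i, bitWt b (z' i).2))
          + ((1 + ρ) ^ m - 1) * ρ ^ (∑ i, bitWt b (z' i).2) := by
      intro z'
      rw [← Finset.sum_mul, key_sum b ρ hq]
      ring
    rw [Finset.sum_congr rfl fun z' _ => inner z', Finset.sum_add_distrib,
      ← Finset.mul_sum, ← Finset.mul_sum, ih, sum_pi_prod_pow b ρ hq, mul_pow]
    field_simp
    ring
end Aux3

section Aux4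
variable {m : ℕ} {F : Type*} [Field F] [Fintype F] [DecidableEq F]
  [Algebra (ZMod 2) F] (b : Module.Basis (Fin m) (ZMod 2) F) (ρ : ℝ)

lemma Tform (hq : Fintype.card F = 2 ^ m) (n : ℕ) :
    ∑ ℓ : Fin n → {a : F // a ≠ 0}, ∑ y : Fin n → F,
      (if (∑ i, (ℓ i : F) * y i) = 0 then (1:ℝ) else 0) * ρ ^ (∑ i, bitWt b (y i))
    = (((2:ℝ)^m - 1)^n * ((1+ρ)^m)^n + ((2:ℝ)^m - 1) * ((2:ℝ)^m - (1+ρ)^m)^n)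
        / (2:ℝ)^m := by
  rw [← Aform b ρ hq n]
  have h1 : ∑ z : Fin n → ({a : F // a ≠ 0} × F),
      (if (∑ i, ((z i).1 : F) * (z i).2) = 0 then (1:ℝ) else 0)
        * ρ ^ (∑ i, bitWt b (z i).2)
      = ∑ p : (Fin n → {a : F // a ≠ 0}) × (Fin n → F),
        (if (∑ i, (p.1 i : F) * p.2 i) = 0 then (1:ℝ) else 0)
          * ρ ^ (∑ i, bitWt b (p.2 i)) := by
    refine Fintype.sum_bijective
      (fun z => (fun i => (z i).1, fun i => (z i).2)) ?_ _ _ (fun z => rfl)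
    constructor
    · intro z w h
      funext i
      have ha := congrFun (congrArg Prod.fst h) i
      have hb := congrFun (congrArg Prod.snd h) i
      simp only at ha hb
      exact Prod.ext ha hb
    · intro p
      exact ⟨fun i => (p.1 i, p.2 i), rfl⟩
  rw [h1, Fintype.sum_prod_type]

lemma Gform (hq : Fintype.card F = 2 ^ m) (K₀ D : ℕ) :
    ∑ ℓ : Fin K₀ → {a : F // a ≠ 0}, ∑ v : Fin (K₀ + D) → F,
      (if (∑ i : Fin K₀, (ℓ i : F) * v (Fin.castAdd D i)) = 0 then (1:ℝ) else 0)
        * ρ ^ (∑ j, bitWt b (v j))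
    = ((((2:ℝ)^m - 1)^K₀ * ((1+ρ)^m)^K₀ + ((2:ℝ)^m - 1) * ((2:ℝ)^m - (1+ρ)^m)^K₀)
        / (2:ℝ)^m) * ((1+ρ)^m)^D := by
  have happ : Function.Bijective
      (fun p : (Fin K₀ → F) × (Fin D → F) => Fin.append p.1 p.2) := by
    constructor
    · intro p q h
      refine Prod.ext (funext fun i => ?_) (funext fun j => ?_)
      · have := congrFun h (Fin.castAdd D i); simpa using this
      · have := congrFun h (Fin.natAdd K₀ j); simpa using this
    · intro v
      refine ⟨(fun i => v (Fin.castAdd D i), fun j => v (Fin.natAdd K₀ j)),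
        funext fun x => ?_⟩
      exact Fin.addCases (fun i => by simp) (fun j => by simp) x
  have h1 : ∀ ℓ : Fin K₀ → {a : F // a ≠ 0},
      ∑ v : Fin (K₀ + D) → F,
        (if (∑ i : Fin K₀, (ℓ i : F) * v (Fin.castAdd D i)) = 0 then (1:ℝ) else 0)
          * ρ ^ (∑ j, bitWt b (v j))
      = (∑ u : Fin K₀ → F,
          (if (∑ i : Fin K₀, (ℓ i : F) * u i) = 0 then (1:ℝ) else 0)
            * ρ ^ (∑ i, bitWt b (u i)))
        * ∑ w : Fin D → F, ρ ^ (∑ j, bitWt b (w j)) := by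
    intro ℓ
    rw [Finset.sum_mul_sum]
    have h2 : ∑ p : (Fin K₀ → F) × (Fin D → F),
        (if (∑ i : Fin K₀, (ℓ i : F) * (Fin.append p.1 p.2) (Fin.castAdd D i)) = 0
          then (1:ℝ) else 0) * ρ ^ (∑ j, bitWt b (Fin.append p.1 p.2 j))
        = ∑ v : Fin (K₀ + D) → F,
          (if (∑ i : Fin K₀, (ℓ i : F) * v (Fin.castAdd D i)) = 0 then (1:ℝ) else 0)
            * ρ ^ (∑ j, bitWt b (v j)) :=
      Fintype.sum_bijective _ happ _ _ (fun p => rfl)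
    rw [← h2, Fintype.sum_prod_type]
    refine Finset.sum_congr rfl fun u _ => Finset.sum_congr rfl fun w _ => ?_
    simp only [Fin.sum_univ_add, Fin.append_left, Fin.append_right, pow_add]
    ring
  rw [Finset.sum_congr rfl fun ℓ _ => h1 ℓ, ← Finset.sum_mul, Tform b ρ hq,
    sum_pi_pow_bitWt b ρ]

end Aux4

def stripEquiv (K L : ℕ) (hL : 0 < L) : Fin L × Fin K ≃ Fin (K * L) where
  toFun p := stripIdx K L p.2.1 p.1.1 p.2.isLt p.1.isLt
  invFun c := (⟨c.1 % L, Nat.mod_lt _ hL⟩, ⟨c.1 / L, by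
    rw [Nat.div_lt_iff_lt_mul hL]; exact c.isLt⟩)
  left_inv p := by
    have h1 : (p.2.1 * L + p.1.1) % L = p.1.1 := by
      rw [mul_comm, Nat.mul_add_mod, Nat.mod_eq_of_lt p.1.isLt]
    have h2 : (p.2.1 * L + p.1.1) / L = p.2.1 := by
      rw [mul_comm, Nat.mul_add_div hL, Nat.div_eq_of_lt p.1.isLt, add_zero]
    ext
    · exact h1
    · exact h2
  right_inv c := by
    apply Fin.ext
    show c.1 / L * L + c.1 % L = c.1
    rw [mul_comm]
    exact Nat.div_add_mod c.1 L

set_option maxHeartbeats 2000000 in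
/-- Let `q = 2^m` and identify `GF(2^m)` with `F₂^m` via a fixed basis `b`; the bit weight
`bw(x)` of `x ∈ GF(2^m)^N` is the sum of the Hamming weights of the binary images of its
coordinates. Let `K ≥ K₀ ≥ 1`, `L ≥ 1`, `N = K·L`, and let the `K₀·L` labels of the strip
pattern be i.i.d. uniform nonzero elements of `GF(2^m)`, giving a random `L×N` matrix `H`.
Then for every real `ρ > 0`, the expectation over the labels of
`∑_{x : Hx = 0} ρ^{bw(x)}` equals `f(φ(ρ))^L`, where
`f(s) = (1/q)[(1+(q-1)s)^{K₀} + (q-1)(1-s)^{K₀}](1+(q-1)s)^{K-K₀}` and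
`φ(ρ) = ((1+ρ)^m - 1)/(q-1)`. -/
theorem stmt_9 (m : ℕ) (hm : 1 ≤ m) (F : Type*) [Field F] [Fintype F] [DecidableEq F]
    [Algebra (ZMod 2) F] (hq : Fintype.card F = 2 ^ m) (b : Module.Basis (Fin m) (ZMod 2) F)
    (K K₀ L : ℕ) (hK₀ : 1 ≤ K₀) (hK : K₀ ≤ K) (hL : 1 ≤ L) (ρ : ℝ) (hρ : 0 < ρ) :
    (∑ lab : Fin L → Fin K₀ → {a : F // a ≠ 0},
        ∑ x ∈ Finset.univ.filter
            (fun x : Fin (K * L) → F => ∀ t : Fin L, ∑ i : Fin K₀,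
              (lab t i : F) *
                x (stripIdx K L i.1 t.1 (lt_of_lt_of_le i.isLt hK) t.isLt) = 0),
          ρ ^ (∑ c, bitWt b (x c))) /
      (Fintype.card (Fin L → Fin K₀ → {a : F // a ≠ 0}) : ℝ)
      = ((1 / (2 : ℝ) ^ m) *
          ((1 + ((2 : ℝ) ^ m - 1) * (((1 + ρ) ^ m - 1) / ((2 : ℝ) ^ m - 1))) ^ K₀ +
            ((2 : ℝ) ^ m - 1) * (1 - ((1 + ρ) ^ m - 1) / ((2 : ℝ) ^ m - 1)) ^ K₀) *
          (1 + ((2 : ℝ) ^ m - 1) * (((1 + ρ) ^ m - 1) / ((2 : ℝ) ^ m - 1))) ^ (K - K₀)) ^ L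
      := by
  obtain ⟨D, rfl⟩ : ∃ D, K = K₀ + D := ⟨K - K₀, (Nat.add_sub_cancel' hK).symm⟩
  have hL' : 0 < L := hL
  have hq1 : ((2:ℝ) ^ m - 1) ≠ 0 := by
    have h2 : (2:ℝ) ≤ 2 ^ m := by
      calc (2:ℝ) = 2 ^ 1 := (pow_one 2).symm
        _ ≤ 2 ^ m := by apply pow_le_pow_right₀ (by norm_num) hm
    linarith
  have hq0 : ((2:ℝ) ^ m) ≠ 0 := by positivity
  set E := stripEquiv (K₀ + D) L hL' with hE
  have hfilter : ∀ lab : Fin L → Fin K₀ → {a : F // a ≠ 0},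
      (∑ x ∈ Finset.univ.filter
          (fun x : Fin ((K₀ + D) * L) → F => ∀ t : Fin L, ∑ i : Fin K₀,
            (lab t i : F) *
              x (stripIdx (K₀ + D) L i.1 t.1 (lt_of_lt_of_le i.isLt hK) t.isLt) = 0),
        ρ ^ (∑ c, bitWt b (x c)))
      = ∑ y : Fin L → Fin (K₀ + D) → F,
          ∏ t, ((if (∑ i : Fin K₀, (lab t i : F) * y t (Fin.castAdd D i)) = 0
              then (1:ℝ) else 0)
            * ρ ^ (∑ i, bitWt b (y t i))) := by
    intro lab
    rw [Finset.sum_filter]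
    have hbij : Function.Bijective
        (fun (y : Fin L → Fin (K₀ + D) → F) (c : Fin ((K₀ + D) * L)) =>
          y (E.symm c).1 (E.symm c).2) := by
      constructor
      · intro y y' h
        funext t i
        have := congrFun h (E (t, i))
        simpa using this
      · intro x
        exact ⟨fun t i => x (E (t, i)), funext fun c => by simp⟩
    refine (Fintype.sum_bijective _ hbij _ _ ?_).symm
    intro y
    dsimp only
    have hcond : ∀ (t : Fin L) (i : Fin K₀),
        y (E.symm (stripIdx (K₀ + D) L i.1 t.1 (lt_of_lt_of_le i.isLt hK) t.isLt)).1
          (E.symm (stripIdx (K₀ + D) L i.1 t.1 (lt_of_lt_of_le i.isLt hK) t.isLt)).2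
        = y t (Fin.castAdd D i) := by
      intro t i
      have h : stripIdx (K₀ + D) L i.1 t.1 (lt_of_lt_of_le i.isLt hK) t.isLt
          = E (t, Fin.castAdd D i) := rfl
      rw [h, Equiv.symm_apply_apply]
    have hbw : ∑ c, bitWt b (y (E.symm c).1 (E.symm c).2) = ∑ t, ∑ i, bitWt b (y t i) := by
      rw [← Equiv.sum_comp E (fun c => bitWt b (y (E.symm c).1 (E.symm c).2))]
      simp only [Equiv.symm_apply_apply]
      rw [Fintype.sum_prod_type]
    rw [Finset.prod_mul_distrib, Fintype.prod_boole, Finset.prod_pow_eq_pow_sum, hbw]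
    simp only [hcond]
    by_cases hc : ∀ t : Fin L, ∑ i : Fin K₀, (lab t i : F) * y t (Fin.castAdd D i) = 0
    · simp [hc]
    · simp [hc]
  simp only [hfilter]
  have hcols : ∀ lab : Fin L → Fin K₀ → {a : F // a ≠ 0},
      (∑ y : Fin L → Fin (K₀ + D) → F,
        ∏ t, ((if (∑ i : Fin K₀, (lab t i : F) * y t (Fin.castAdd D i)) = 0
            then (1:ℝ) else 0)
          * ρ ^ (∑ i, bitWt b (y t i))))
      = ∏ t : Fin L, ∑ v : Fin (K₀ + D) → F,
          ((if (∑ i : Fin K₀, (lab t i : F) * v (Fin.castAdd D i)) = 0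
              then (1:ℝ) else 0)
            * ρ ^ (∑ i, bitWt b (v i))) :=
    fun lab => (Fintype.prod_sum (fun (t : Fin L) (v : Fin (K₀ + D) → F) =>
      (if (∑ i : Fin K₀, (lab t i : F) * v (Fin.castAdd D i)) = 0 then (1:ℝ) else 0)
        * ρ ^ (∑ i, bitWt b (v i)))).symm
  simp only [hcols]
  have houter : ∑ lab : Fin L → Fin K₀ → {a : F // a ≠ 0},
      ∏ t : Fin L, ∑ v : Fin (K₀ + D) → F,
        ((if (∑ i : Fin K₀, (lab t i : F) * v (Fin.castAdd D i)) = 0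
            then (1:ℝ) else 0)
          * ρ ^ (∑ i, bitWt b (v i)))
      = ∏ _t : Fin L, ∑ ℓ : Fin K₀ → {a : F // a ≠ 0}, ∑ v : Fin (K₀ + D) → F,
        ((if (∑ i : Fin K₀, (ℓ i : F) * v (Fin.castAdd D i)) = 0
            then (1:ℝ) else 0)
          * ρ ^ (∑ i, bitWt b (v i))) :=
    (Fintype.prod_sum (fun (_t : Fin L) (ℓ : Fin K₀ → {a : F // a ≠ 0}) =>
      ∑ v : Fin (K₀ + D) → F,
        (if (∑ i : Fin K₀, (ℓ i : F) * v (Fin.castAdd D i)) = 0 then (1:ℝ) else 0)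
          * ρ ^ (∑ i, bitWt b (v i)))).symm
  rw [houter, Finset.prod_const, Finset.card_univ, Fintype.card_fin,
    Gform b ρ hq K₀ D]
  have hcard : (Fintype.card (Fin L → Fin K₀ → {a : F // a ≠ 0}) : ℝ)
      = (((2:ℝ) ^ m - 1) ^ K₀) ^ L := by
    rw [Fintype.card_fun, Fintype.card_fun, card_nz hq, Fintype.card_fin, Fintype.card_fin]
    push_cast [Nat.one_le_two_pow]
    ring
  rw [hcard, ← div_pow]
  congr 1
  have e1 : 1 + ((2:ℝ) ^ m - 1) * (((1 + ρ) ^ m - 1) / ((2:ℝ) ^ m - 1)) = (1 + ρ) ^ m := by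
    field_simp
    ring
  have e2 : 1 - ((1 + ρ) ^ m - 1) / ((2:ℝ) ^ m - 1)
      = ((2:ℝ) ^ m - (1 + ρ) ^ m) / ((2:ℝ) ^ m - 1) := by
    field_simp
    ring
  rw [e1, e2, div_pow, Nat.add_sub_cancel_left]
  field_simp
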